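/- Under Assumptions 1, 2, 3 on h1 and h2, every Y ∈ (ℝ^d)^n such that y_i ∈ {x_1, …, x_n} for all i and y_i = y_j for some i ≠ j is a sub-optimal strict local minimum of g_SP, i.e., g_SP(Y) is strictly greater than the global minimum value (1/2)·ξ(1) and there is ε > 0 with g_SP(Y') > g_SP(Y) for every Y' ≠ Y with ‖Y' − Y‖ < ε. The set of such Y has exactly n^n − n! elements, so g_SP has at least n^n − n! sub-optimal strict local minima. -/

import Mathlib

open scoped BigOperators

private lemma interp_aux {E : Type*} [MetricSpace E] (s : Finset E) (v : E → ℝ) :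
    ∃ f : E → ℝ, Continuous f ∧ ∀ p ∈ s, f p = v p := by
  classical
  induction s using Finset.induction_on with
  | empty => exact ⟨fun _ => 0, continuous_const, by simp⟩
  | @insert a s ha ih =>
    obtain ⟨f, hf, hfs⟩ := ih
    rcases s.eq_empty_or_nonempty with hs | hs
    · subst hs
      exact ⟨fun _ => v a, continuous_const, by simp⟩
    · set r := s.inf' hs (fun p => dist a p) with hr
      have hrpos : 0 < r := by
        rw [hr, Finset.lt_inf'_iff]
        intro b hb
        exact dist_pos.2 (fun h => ha (h ▸ hb))
      refine ⟨fun z => f z + (v a - f a) * max 0 (1 - dist z a / r), ?_, ?_⟩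
      · exact hf.add (continuous_const.mul (continuous_const.max
          (continuous_const.sub ((continuous_id.dist continuous_const).div_const r))))
      · intro p hp
        rcases Finset.mem_insert.1 hp with rfl | hp
        · have h1 : max 0 (1 - dist p p / r) = 1 := by
            rw [dist_self, zero_div, sub_zero]; exact max_eq_right zero_le_one
          show f p + (v p - f p) * (0 ⊔ (1 - dist p p / r)) = v p
          rw [h1]; ring
        · have hle : r ≤ dist p a := by
            rw [dist_comm]; exact Finset.inf'_le _ hp
          have h0 : 1 - dist p a / r ≤ 0 := by
            rw [sub_nonpos, le_div_iff₀ hrpos]; linarith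
          show f p + (v a - f a) * (0 ⊔ (1 - dist p a / r)) = v p
          rw [max_eq_left h0, mul_zero, add_zero]
          exact hfs p hp

private lemma count_noninj (n : ℕ) :
    Set.ncard {g : Fin n → Fin n | ¬ Function.Injective g} = n ^ n - n.factorial := by
  classical
  have h1 : {g : Fin n → Fin n | ¬ Function.Injective g}
      = ↑(Finset.univ.filter (fun g : Fin n → Fin n => ¬ Function.Injective g)) := by
    ext g; simp
  rw [h1, Set.ncard_coe_finset]
  have h2 := Finset.card_filter_add_card_filter_not
    (s := (Finset.univ : Finset (Fin n → Fin n)))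
    (p := fun g => Function.Injective g)
  have h3 : (Finset.univ.filter (fun g : Fin n → Fin n => Function.Injective g)).card
      = n.factorial := by
    rw [← Fintype.card_subtype]
    rw [Fintype.card_congr (Equiv.subtypeInjectiveEquivEmbedding (Fin n) (Fin n)),
      Fintype.card_embedding_eq, Fintype.card_fin, Nat.descFactorial_self]
  have h4 : (Finset.univ : Finset (Fin n → Fin n)).card = n ^ n := by
    rw [Finset.card_univ, Fintype.card_fun, Fintype.card_fin]
  omega
/-- ξ(m) = sup_{t∈ℝ} (h1(t) + m·h2(−t)). -/
noncomputable def xi (h1 h2 : ℝ → ℝ) (m : ℕ) : ℝ :=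
  sSup {s : ℝ | ∃ t : ℝ, s = h1 t + (m : ℝ) * h2 (-t)}

private lemma xiSet_nonempty (h1 h2 : ℝ → ℝ) (m : ℕ) :
    {s : ℝ | ∃ t : ℝ, s = h1 t + (m : ℝ) * h2 (-t)}.Nonempty :=
  ⟨_, 0, rfl⟩

private lemma xiSet_bdd {h1 h2 : ℝ → ℝ} (A1a : IsLUB (Set.range h1) 0)
    (A1b : IsLUB (Set.range h2) 0) (m : ℕ) :
    BddAbove {s : ℝ | ∃ t : ℝ, s = h1 t + (m : ℝ) * h2 (-t)} := by
  refine ⟨0, ?_⟩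
  rintro s ⟨t, rfl⟩
  have e1 : h1 t ≤ 0 := A1a.1 ⟨t, rfl⟩
  have e2 : h2 (-t) ≤ 0 := A1b.1 ⟨-t, rfl⟩
  have e3 : (m : ℝ) * h2 (-t) ≤ 0 :=
    mul_nonpos_of_nonneg_of_nonpos (Nat.cast_nonneg m) e2
  linarith

private lemma le_xi {h1 h2 : ℝ → ℝ} (A1a : IsLUB (Set.range h1) 0)
    (A1b : IsLUB (Set.range h2) 0) (m : ℕ) (t : ℝ) :
    h1 t + (m : ℝ) * h2 (-t) ≤ xi h1 h2 m :=
  le_csSup (xiSet_bdd A1a A1b m) ⟨t, rfl⟩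

private lemma xi_zero {h1 h2 : ℝ → ℝ} (A1a : IsLUB (Set.range h1) 0) :
    xi h1 h2 0 = 0 := by
  have hset : {s : ℝ | ∃ t : ℝ, s = h1 t + ((0 : ℕ) : ℝ) * h2 (-t)} = Set.range h1 := by
    ext s
    simp only [Nat.cast_zero, zero_mul, add_zero, Set.mem_setOf_eq, Set.mem_range]
    exact ⟨fun ⟨t, ht⟩ => ⟨t, ht.symm⟩, fun ⟨t, ht⟩ => ⟨t, ht.symm⟩⟩
  rw [xi, hset]
  exact A1a.csSup_eq ⟨h1 0, 0, rfl⟩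

private lemma xi_anti {h1 h2 : ℝ → ℝ} {n : ℕ}
    (A3 : ∀ m : ℕ, 1 ≤ m → m ≤ n → xi h1 h2 m < xi h1 h2 (m - 1)) :
    ∀ b, b ≤ n → ∀ a, a ≤ b → xi h1 h2 b ≤ xi h1 h2 a := by
  intro b
  induction b with
  | zero =>
    intro _ a ha
    obtain rfl : a = 0 := by omega
    exact le_rfl
  | succ b ih =>
    intro hb a ha
    rcases eq_or_lt_of_le ha with rfl | hlt
    · exact le_rfl
    · have h1' : xi h1 h2 (b + 1) < xi h1 h2 b := by
        have := A3 (b + 1) (by omega) hb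
        simpa using this
      exact le_of_lt (lt_of_lt_of_le h1' (ih (by omega) a (by omega)))

private lemma xi_gap {h1 h2 : ℝ → ℝ} {n : ℕ} (hn : 1 ≤ n)
    (A3 : ∀ m : ℕ, 1 ≤ m → m ≤ n → xi h1 h2 m < xi h1 h2 (m - 1)) :
    ∃ γ > 0, ∀ a b : ℕ, a < b → b ≤ n → xi h1 h2 b + γ ≤ xi h1 h2 a := by
  classical
  set D := (Finset.Icc 1 n).image (fun j => xi h1 h2 (j - 1) - xi h1 h2 j) with hD
  have hDne : D.Nonempty :=
    ⟨_, Finset.mem_image_of_mem _ (Finset.mem_Icc.2 ⟨le_refl 1, hn⟩)⟩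
  refine ⟨D.min' hDne, ?_, ?_⟩
  · rw [gt_iff_lt, Finset.lt_min'_iff]
    intro y hy
    rw [hD, Finset.mem_image] at hy
    obtain ⟨j, hj, rfl⟩ := hy
    rw [Finset.mem_Icc] at hj
    linarith [A3 j hj.1 hj.2]
  · intro a b hab hbn
    have hb1 : 1 ≤ b := by omega
    have e1 : D.min' hDne ≤ xi h1 h2 (b - 1) - xi h1 h2 b :=
      Finset.min'_le _ _ (Finset.mem_image_of_mem _ (Finset.mem_Icc.2 ⟨hb1, hbn⟩))
    have e2 : xi h1 h2 (b - 1) ≤ xi h1 h2 a := xi_anti A3 (b - 1) (by omega) a (by omega)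
    linarith
open scoped Classical

private lemma fiber_sum {d n : ℕ} {x : Fin n → EuclideanSpace ℝ (Fin d)}
    (hx : Function.Injective x) (Y : Fin n → EuclideanSpace ℝ (Fin d))
    (F : EuclideanSpace ℝ (Fin d) → ℝ) :
    ∑ i ∈ Finset.univ.filter (fun i => ∃ k, Y i = x k), F (Y i)
      = ∑ k, ((Finset.univ.filter (fun i => Y i = x k)).card : ℝ) * F (x k) := by
  classical
  have hU : Finset.univ.filter (fun i => ∃ k, Y i = x k)
      = Finset.univ.biUnion (fun k => Finset.univ.filter (fun i => Y i = x k)) := by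
    ext i; simp
  rw [hU, Finset.sum_biUnion]
  · refine Finset.sum_congr rfl (fun k _ => ?_)
    rw [Finset.sum_congr rfl (fun i hi => by rw [(Finset.mem_filter.1 hi).2]),
      Finset.sum_const, nsmul_eq_mul]
  · intro k _ l _ hkl
    refine Finset.disjoint_left.2 (fun i hik hil => ?_)
    have e1 := (Finset.mem_filter.1 hik).2
    have e2 := (Finset.mem_filter.1 hil).2
    exact hkl (hx (e1 ▸ e2))

private lemma gspSet_nonempty {d n : ℕ} (h1 h2 : ℝ → ℝ)
    (x Y : Fin n → EuclideanSpace ℝ (Fin d)) :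
    {s : ℝ | ∃ f : EuclideanSpace ℝ (Fin d) → ℝ, Continuous f ∧
      s = ∑ i, (h1 (f (x i)) + h2 (-(f (Y i))))}.Nonempty :=
  ⟨_, fun _ => 0, continuous_const, rfl⟩

private lemma gspSet_bdd {d n : ℕ} {h1 h2 : ℝ → ℝ}
    (A1a : IsLUB (Set.range h1) 0) (A1b : IsLUB (Set.range h2) 0)
    (x Y : Fin n → EuclideanSpace ℝ (Fin d)) :
    BddAbove {s : ℝ | ∃ f : EuclideanSpace ℝ (Fin d) → ℝ, Continuous f ∧
      s = ∑ i, (h1 (f (x i)) + h2 (-(f (Y i))))} := by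
  refine ⟨0, ?_⟩
  rintro s ⟨f, hf, rfl⟩
  apply Finset.sum_nonpos
  intro i _
  have e1 : h1 (f (x i)) ≤ 0 := A1a.1 ⟨f (x i), rfl⟩
  have e2 : h2 (-(f (Y i))) ≤ 0 := A1b.1 ⟨-(f (Y i)), rfl⟩
  linarith

private lemma sSup_upper {d n : ℕ} {x : Fin n → EuclideanSpace ℝ (Fin d)}
    (hx : Function.Injective x) {h1 h2 : ℝ → ℝ}
    (A1a : IsLUB (Set.range h1) 0) (A1b : IsLUB (Set.range h2) 0)
    (Y : Fin n → EuclideanSpace ℝ (Fin d)) (hY : ∀ i, ∃ k, Y i = x k) :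
    sSup {s : ℝ | ∃ f : EuclideanSpace ℝ (Fin d) → ℝ, Continuous f ∧
        s = ∑ i, (h1 (f (x i)) + h2 (-(f (Y i))))}
      ≤ ∑ k, xi h1 h2 ((Finset.univ.filter (fun i => Y i = x k)).card) := by
  classical
  refine csSup_le (gspSet_nonempty h1 h2 x Y) ?_
  rintro s ⟨f, hfc, rfl⟩
  have hU : Finset.univ.filter (fun i => ∃ k, Y i = x k) = (Finset.univ : Finset (Fin n)) :=
    Finset.filter_true_of_mem (fun i _ => hY i)
  have key : ∑ i, h2 (-(f (Y i)))
      = ∑ k, ((Finset.univ.filter (fun i => Y i = x k)).card : ℝ) * h2 (-(f (x k))) := by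
    conv_lhs => rw [← hU]
    exact fiber_sum hx Y (fun p => h2 (-(f p)))
  rw [Finset.sum_add_distrib, key, ← Finset.sum_add_distrib]
  exact Finset.sum_le_sum (fun k _ => le_xi A1a A1b _ (f (x k)))
private lemma sSup_lower {d n : ℕ} (hn : 0 < n) {x : Fin n → EuclideanSpace ℝ (Fin d)}
    (hx : Function.Injective x) {h1 h2 : ℝ → ℝ}
    (A1a : IsLUB (Set.range h1) 0) (A1b : IsLUB (Set.range h2) 0)
    (Y : Fin n → EuclideanSpace ℝ (Fin d)) :
    ∑ k, xi h1 h2 ((Finset.univ.filter (fun i => Y i = x k)).card)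
      ≤ sSup {s : ℝ | ∃ f : EuclideanSpace ℝ (Fin d) → ℝ, Continuous f ∧
          s = ∑ i, (h1 (f (x i)) + h2 (-(f (Y i))))} := by
  classical
  apply le_of_forall_sub_le
  intro δ hδ
  set m : Fin n → ℕ := fun k => (Finset.univ.filter (fun i => Y i = x k)).card with hm
  have hnR : (0:ℝ) < (n:ℝ) := by exact_mod_cast hn
  have hδ2 : (0:ℝ) < δ / (2 * n) := by positivity
  -- choose near-optimal t k for each cluster
  have hex : ∀ k : Fin n, ∃ t : ℝ,
      xi h1 h2 (m k) - δ / (2 * n) < h1 t + (m k : ℝ) * h2 (-t) := by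
    intro k
    have hlt : xi h1 h2 (m k) - δ / (2 * n) < xi h1 h2 (m k) := by linarith
    obtain ⟨s, hs, hlt'⟩ := exists_lt_of_lt_csSup (xiSet_nonempty h1 h2 (m k)) hlt
    obtain ⟨t, rfl⟩ := hs
    exact ⟨t, hlt'⟩
  choose t ht using hex
  -- choose a near-optimal value for stray points
  obtain ⟨c, hc, hcl, -⟩ := A1b.exists_between (show -(δ / (2 * (n:ℝ))) < 0 by linarith)
  obtain ⟨u, hu⟩ := hc
  -- build the continuous function
  set v : EuclideanSpace ℝ (Fin d) → ℝ :=
    fun p => if h : ∃ k, p = x k then t h.choose else -u with hv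
  obtain ⟨f, hfc, hfv⟩ := interp_aux
    ((Finset.univ.image x) ∪ (Finset.univ.image Y)) v
  have hfx : ∀ k, f (x k) = t k := by
    intro k
    have hmem : x k ∈ (Finset.univ.image x) ∪ (Finset.univ.image Y) :=
      Finset.mem_union_left _ (Finset.mem_image_of_mem x (Finset.mem_univ k))
    have hek : ∃ k', x k = x k' := ⟨k, rfl⟩
    rw [hfv _ hmem, hv]
    simp only [dif_pos hek]
    congr 1
    exact (hx hek.choose_spec).symm
  have hfY : ∀ i, ¬ (∃ k, Y i = x k) → f (Y i) = -u := by
    intro i hi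
    have hmem : Y i ∈ (Finset.univ.image x) ∪ (Finset.univ.image Y) :=
      Finset.mem_union_right _ (Finset.mem_image_of_mem Y (Finset.mem_univ i))
    rw [hfv _ hmem, hv]
    simp only [dif_neg hi]
  -- compute the value of the sum for f
  set B := (Finset.univ.filter (fun i => ¬ ∃ k, Y i = x k)).card with hB
  have hval : ∑ i, (h1 (f (x i)) + h2 (-(f (Y i))))
      = ∑ k, (h1 (t k) + (m k : ℝ) * h2 (-(t k))) + (B : ℝ) * h2 u := by
    rw [Finset.sum_add_distrib, Finset.sum_add_distrib]
    have e1 : ∑ i, h1 (f (x i)) = ∑ k, h1 (t k) :=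
      Finset.sum_congr rfl (fun i _ => by rw [hfx])
    have e2 : ∑ i, h2 (-(f (Y i)))
        = ∑ k, (m k : ℝ) * h2 (-(t k)) + (B : ℝ) * h2 u := by
      rw [← Finset.sum_filter_add_sum_filter_not Finset.univ (fun i => ∃ k, Y i = x k)
        (fun i => h2 (-(f (Y i))))]
      congr 1
      · have := fiber_sum hx Y (fun p => h2 (-(f p)))
        rw [this]
        exact Finset.sum_congr rfl (fun k _ => by rw [hfx])
      · rw [Finset.sum_congr rfl (fun i hi => by
            rw [hfY i (Finset.mem_filter.1 hi).2, neg_neg]),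
          Finset.sum_const, nsmul_eq_mul, hB]
    rw [e1, e2, add_assoc]
  -- estimate
  have hBn : (B : ℝ) ≤ (n : ℝ) := by
    have : B ≤ n := le_trans (Finset.card_filter_le _ _) (by simp)
    exact_mod_cast this
  have hBnn : (0:ℝ) ≤ (B : ℝ) := Nat.cast_nonneg _
  have hstray : -(δ / 2) ≤ (B : ℝ) * h2 u := by
    have h2u : -(δ / (2 * n)) ≤ h2 u := by rw [hu]; exact hcl.le
    have e1 : (B : ℝ) * (-(δ / (2 * n))) ≤ (B : ℝ) * h2 u :=
      mul_le_mul_of_nonneg_left h2u hBnn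
    have e2 : (n : ℝ) * (-(δ / (2 * n))) ≤ (B : ℝ) * (-(δ / (2 * n))) := by
      apply mul_le_mul_of_nonpos_right hBn
      linarith
    have e3 : (n : ℝ) * (-(δ / (2 * n))) = -(δ / 2) := by
      field_simp
    linarith
  have hmain : ∑ k, xi h1 h2 (m k) - δ ≤ ∑ i, (h1 (f (x i)) + h2 (-(f (Y i)))) := by
    rw [hval]
    have e1 : ∑ k, (xi h1 h2 (m k) - δ / (2 * n))
        ≤ ∑ k, (h1 (t k) + (m k : ℝ) * h2 (-(t k))) :=
      Finset.sum_le_sum (fun k _ => (ht k).le)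
    rw [Finset.sum_sub_distrib, Finset.sum_const, Finset.card_univ, Fintype.card_fin,
      nsmul_eq_mul] at e1
    have e3 : (n : ℝ) * (δ / (2 * n)) = δ / 2 := by field_simp
    linarith
  calc ∑ k, xi h1 h2 (m k) - δ ≤ ∑ i, (h1 (f (x i)) + h2 (-(f (Y i)))) := hmain
    _ ≤ _ := le_csSup (gspSet_bdd A1a A1b x Y) ⟨f, hfc, rfl⟩
/-- The separable-GAN loss. -/
noncomputable def gSP {d n : ℕ} (h1 h2 : ℝ → ℝ)
    (x Y : Fin n → EuclideanSpace ℝ (Fin d)) : ℝ :=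
  (1 / (2 * (n : ℝ))) * sSup {s : ℝ |
    ∃ f : EuclideanSpace ℝ (Fin d) → ℝ, Continuous f ∧
      s = ∑ i, (h1 (f (x i)) + h2 (-(f (Y i))))}

theorem stmt1 {d n : ℕ} (hd : 1 ≤ d) (hn : 1 ≤ n)
    (x : Fin n → EuclideanSpace ℝ (Fin d)) (hx : Function.Injective x)
    (h1 h2 : ℝ → ℝ)
    (A1a : IsLUB (Set.range h1) 0) (A1b : IsLUB (Set.range h2) 0)
    (A2 : ∀ m : ℕ, 2 ≤ m → m ≤ n → (m : ℝ) * xi h1 h2 1 < xi h1 h2 m)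
    (A3 : ∀ m : ℕ, 1 ≤ m → m ≤ n → xi h1 h2 m < xi h1 h2 (m - 1)) :
    (∀ Y : Fin n → EuclideanSpace ℝ (Fin d),
        (∀ i, ∃ k, Y i = x k) → (∃ i j, i ≠ j ∧ Y i = Y j) →
        ((1 / 2) * xi h1 h2 1 < gSP h1 h2 x Y ∧
          ∃ ε > 0, ∀ Y' : Fin n → EuclideanSpace ℝ (Fin d),
            Y' ≠ Y → dist Y' Y < ε → gSP h1 h2 x Y < gSP h1 h2 x Y')) ∧
    Set.ncard {Y : Fin n → EuclideanSpace ℝ (Fin d) |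
        (∀ i, ∃ k, Y i = x k) ∧ ∃ i j, i ≠ j ∧ Y i = Y j}
      = n ^ n - n.factorial := by
  classical
  have hn0 : 0 < n := hn
  have hnR : (0:ℝ) < (n : ℝ) := by exact_mod_cast hn0
  have hc : (0:ℝ) < 1 / (2 * (n : ℝ)) := by positivity
  constructor
  · intro Y hY hcol
    set m : Fin n → ℕ := fun k => (Finset.univ.filter (fun i' => Y i' = x k)).card with hm
    have hmn : ∀ k, m k ≤ n := fun k => le_trans (Finset.card_filter_le _ _) (by simp)
    have hsum : ∑ k, ((m k : ℕ) : ℝ) = (n : ℝ) := by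
      have hU : Finset.univ.filter (fun i' => ∃ k, Y i' = x k) = (Finset.univ : Finset (Fin n)) :=
        Finset.filter_true_of_mem (fun i' _ => hY i')
      have hfs := fiber_sum hx Y (fun _ => (1:ℝ))
      rw [hU] at hfs
      simp only [mul_one, Finset.sum_const, Finset.card_univ, Fintype.card_fin,
        nsmul_eq_mul] at hfs
      simpa using hfs.symm
    obtain ⟨i, j, hij, hYij⟩ := hcol
    obtain ⟨k0, hk0⟩ := hY i
    have hmk0 : 2 ≤ m k0 := by
      have hsubp : ({i, j} : Finset (Fin n)) ⊆ Finset.univ.filter (fun i' => Y i' = x k0) := by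
        intro a haa
        rcases Finset.mem_insert.1 haa with rfl | haa
        · exact Finset.mem_filter.2 ⟨Finset.mem_univ _, hk0⟩
        · rw [Finset.mem_singleton] at haa; subst haa
          exact Finset.mem_filter.2 ⟨Finset.mem_univ _, hYij.symm.trans hk0⟩
      calc 2 = ({i, j} : Finset (Fin n)).card := (Finset.card_pair hij).symm
        _ ≤ m k0 := Finset.card_le_card hsubp
    have hlow := sSup_lower hn0 hx A1a A1b Y
    have hup := sSup_upper hx A1a A1b Y hY
    have hx1 : (n:ℝ) * xi h1 h2 1 < ∑ k, xi h1 h2 (m k) := by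
      have hterm : ∀ k ∈ (Finset.univ : Finset (Fin n)),
          (m k : ℝ) * xi h1 h2 1 ≤ xi h1 h2 (m k) := by
        intro k _
        obtain h0 | h1' | hge : m k = 0 ∨ m k = 1 ∨ 2 ≤ m k := by omega
        · rw [h0, xi_zero A1a]; norm_num
        · rw [h1']; norm_num
        · exact (A2 (m k) hge (hmn k)).le
      have hstrict : (m k0 : ℝ) * xi h1 h2 1 < xi h1 h2 (m k0) := A2 _ hmk0 (hmn k0)
      calc (n:ℝ) * xi h1 h2 1 = ∑ k, (m k:ℝ) * xi h1 h2 1 := by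
            rw [← Finset.sum_mul, hsum]
        _ < ∑ k, xi h1 h2 (m k) := Finset.sum_lt_sum hterm ⟨k0, Finset.mem_univ _, hstrict⟩
    constructor
    · rw [gSP]
      have heq : (1/2) * xi h1 h2 1 = (1/(2*(n:ℝ))) * ((n:ℝ) * xi h1 h2 1) := by
        field_simp
      rw [heq]
      exact mul_lt_mul_of_pos_left (lt_of_lt_of_le hx1 hlow) hc
    · obtain ⟨γ, hγ, hgap⟩ := xi_gap hn A3
      set D := (Finset.univ.filter (fun p : Fin n × Fin n => p.1 ≠ p.2)).image
          (fun p => dist (x p.1) (x p.2)) with hD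
      have hDmem : ∀ k k' : Fin n, k ≠ k' → dist (x k) (x k') ∈ D := by
        intro k k' hkk
        rw [hD, Finset.mem_image]
        exact ⟨(k, k'), Finset.mem_filter.2 ⟨Finset.mem_univ (k, k'), hkk⟩, rfl⟩
      have hDne : D.Nonempty := ⟨_, hDmem i j hij⟩
      have hDpos : 0 < D.min' hDne := by
        rw [Finset.lt_min'_iff]
        intro y hy
        rw [hD, Finset.mem_image] at hy
        obtain ⟨p, hp, rfl⟩ := hy
        exact dist_pos.2 (fun h => (Finset.mem_filter.1 hp).2 (hx h))
      refine ⟨D.min' hDne / 2, by positivity, ?_⟩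
      intro Y' hne hdist
      set m' : Fin n → ℕ := fun k => (Finset.univ.filter (fun i' => Y' i' = x k)).card with hm'
      have hkey : ∀ i' k, Y' i' = x k → Y i' = x k := by
        intro i' k h
        obtain ⟨k', hk'⟩ := hY i'
        have hdk : dist (x k) (x k') < D.min' hDne := by
          have h1' : dist (Y' i') (Y i') ≤ dist Y' Y := dist_le_pi_dist Y' Y i'
          rw [h, hk'] at h1'
          calc dist (x k) (x k') ≤ dist Y' Y := h1'
            _ < D.min' hDne / 2 := hdist
            _ < D.min' hDne := by linarith
        have hkk' : k = k' := by
          by_contra hkk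
          exact absurd hdk (not_lt.2 (Finset.min'_le _ _ (hDmem k k' hkk)))
        rw [hkk']; exact hk'
      have hsub : ∀ k, Finset.univ.filter (fun i' => Y' i' = x k)
          ⊆ Finset.univ.filter (fun i' => Y i' = x k) := by
        intro k a ha
        exact Finset.mem_filter.2 ⟨Finset.mem_univ _, hkey a k (Finset.mem_filter.1 ha).2⟩
      have hle : ∀ k, m' k ≤ m k := fun k => Finset.card_le_card (hsub k)
      obtain ⟨i0, hi0⟩ := Function.ne_iff.1 hne
      obtain ⟨k1, hk1⟩ := hY i0
      have hi0notin : i0 ∉ Finset.univ.filter (fun i' => Y' i' = x k1) := by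
        intro hmem
        exact hi0 (((Finset.mem_filter.1 hmem).2).trans hk1.symm)
      have hlt1 : m' k1 < m k1 := by
        apply Finset.card_lt_card
        exact ⟨hsub k1, fun hsub' =>
          hi0notin (hsub' (Finset.mem_filter.2 ⟨Finset.mem_univ _, hk1⟩))⟩
      have hsumgap : ∑ k, xi h1 h2 (m k) + γ ≤ ∑ k, xi h1 h2 (m' k) := by
        have hterm : ∀ k ∈ (Finset.univ : Finset (Fin n)),
            0 ≤ xi h1 h2 (m' k) - xi h1 h2 (m k) := by
          intro k _
          have := xi_anti A3 (m k) (hmn k) (m' k) (hle k)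
          linarith
        have hk1' : γ ≤ xi h1 h2 (m' k1) - xi h1 h2 (m k1) := by
          have := hgap (m' k1) (m k1) hlt1 (hmn k1)
          linarith
        have hsingle := Finset.single_le_sum hterm (Finset.mem_univ k1)
        have hsplit : ∑ k, (xi h1 h2 (m' k) - xi h1 h2 (m k))
            = ∑ k, xi h1 h2 (m' k) - ∑ k, xi h1 h2 (m k) := Finset.sum_sub_distrib _ _
        linarith
      have hlow' := sSup_lower hn0 hx A1a A1b Y'
      rw [gSP, gSP]
      apply mul_lt_mul_of_pos_left _ hc
      calc sSup {s : ℝ | ∃ f : EuclideanSpace ℝ (Fin d) → ℝ, Continuous f ∧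
              s = ∑ i', (h1 (f (x i')) + h2 (-(f (Y i'))))}
          ≤ ∑ k, xi h1 h2 (m k) := hup
        _ < ∑ k, xi h1 h2 (m' k) := by linarith
        _ ≤ _ := hlow'
  · have himg : {Y : Fin n → EuclideanSpace ℝ (Fin d) |
        (∀ i, ∃ k, Y i = x k) ∧ ∃ i j, i ≠ j ∧ Y i = Y j}
        = (fun g : Fin n → Fin n => x ∘ g) '' {g | ¬ Function.Injective g} := by
      ext Y
      constructor
      · rintro ⟨hY, i, j, hij, hYij⟩
        choose g hg using hY
        refine ⟨g, fun hinj => hij (hinj (hx (((hg i).symm.trans hYij).trans (hg j)))), ?_⟩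
        funext i'
        exact (hg i').symm
      · rintro ⟨g, hg, rfl⟩
        refine ⟨fun i => ⟨g i, rfl⟩, ?_⟩
        obtain ⟨a, b, hgab, hab⟩ := Function.not_injective_iff.1 hg
        exact ⟨a, b, hab, by simp [Function.comp, hgab]⟩
    have hinj : Function.Injective (fun g : Fin n → Fin n => x ∘ g) := by
      intro g g' hgg
      funext i
      exact hx (congrFun hgg i)
    rw [himg, Set.ncard_image_of_injective _ hinj, count_noninj]
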